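/- (Lemma 1, necessity.) If a strategy profile Q with all Q_i > 0 is a Nash equilibrium of the demand-declaration game, then Q satisfies both C1 (Σ_i Q_i = Q_tot) and C2 (h_i(Q) = h_j(Q) for all i, j). -/

import Mathlib

open Finset

lemma log_ratio_ge {X δ : ℝ} (hX : 0 < X) (hδ : 0 ≤ δ) :
    δ / (X + δ) ≤ Real.log (X + δ) - Real.log X := by
  have h1 : 0 < X + δ := by linarith
  have h2 : Real.log (X / (X + δ)) ≤ X / (X + δ) - 1 :=
    Real.log_le_sub_one_of_pos (by positivity)
  rw [Real.log_div hX.ne' h1.ne'] at h2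
  have h3 : X / (X + δ) - 1 = -(δ / (X + δ)) := by field_simp; ring
  rw [h3] at h2; linarith

lemma log_ratio_le {X δ : ℝ} (hδ : 0 ≤ δ) (h : 0 < X - δ) :
    Real.log X - Real.log (X - δ) ≤ δ / (X - δ) := by
  have hX : 0 < X := by linarith
  have h2 : Real.log (X / (X - δ)) ≤ X / (X - δ) - 1 :=
    Real.log_le_sub_one_of_pos (by positivity)
  rw [Real.log_div hX.ne' h.ne'] at h2
  have h3 : X / (X - δ) - 1 = δ / (X - δ) := by field_simp; ring
  rw [h3] at h2; linarith

lemma logform {cP t : ℝ} (h : 0 < cP) (ht : 0 ≤ t) :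
    Real.log (1 + t / cP) = Real.log (cP + t) - Real.log cP := by
  rw [← Real.log_div (by positivity) h.ne']
  congr 1
  field_simp

/-- Lemma 1, necessity: if a strategy profile Q of positive declared
demands is a Nash equilibrium of the demand-declaration game (no user i has a
unilateral deviation Q' > 0 yielding a strictly preferred outcome: higher utility,
or equal utility and strictly larger granted quota), then Q satisfies both
C1 (Σ_i Q_i = Q_tot) and C2 (h_i(Q) = h_j(Q) for all i,j, where
h_i(Q) = Q_i(Ψ+c_i)/(Ψψ_i)). Here `qalloc` assigns to each positive profile the
(unique) maximizer of the social welfare S over the feasible set of that profile. -/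
theorem stmt_15 (N : ℕ) (hN : 1 ≤ N) (ψ c : Fin N → ℝ)
    (hψ : ∀ i, 0 < ψ i) (hc : ∀ i, 0 < c i)
    (Ψ Qtot : ℝ) (hΨ : 0 < Ψ) (hQtot : 0 < Qtot)
    (qalloc : (Fin N → ℝ) → Fin N → ℝ)
    (hqalloc : ∀ P : Fin N → ℝ, (∀ i, 0 < P i) →
      ((∀ i, 0 ≤ qalloc P i ∧ qalloc P i ≤ P i) ∧ ∑ i, qalloc P i ≤ Qtot) ∧
      ∀ q' : Fin N → ℝ, ((∀ i, 0 ≤ q' i ∧ q' i ≤ P i) ∧ ∑ i, q' i ≤ Qtot) →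
        ∑ i, ψ i * Real.log (1 + Ψ * q' i / (c i * P i)) ≤
          ∑ i, ψ i * Real.log (1 + Ψ * qalloc P i / (c i * P i)))
    (Q : Fin N → ℝ) (hQpos : ∀ i, 0 < Q i)
    (hNE : ∀ i : Fin N, ∀ Q' : ℝ, 0 < Q' →
      ¬ (Real.log (1 + Ψ * qalloc (Function.update Q i Q') i / (c i * Q')) >
           Real.log (1 + Ψ * qalloc Q i / (c i * Q i)) ∨
         (Real.log (1 + Ψ * qalloc (Function.update Q i Q') i / (c i * Q')) =
            Real.log (1 + Ψ * qalloc Q i / (c i * Q i)) ∧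
          qalloc (Function.update Q i Q') i > qalloc Q i))) :
    (∑ i, Q i = Qtot) ∧
    (∀ i j : Fin N, Q i * (Ψ + c i) / (Ψ * ψ i) = Q j * (Ψ + c j) / (Ψ * ψ j)) := by

  -- SLACK: if some coordinate is unsaturated then the quota is exhausted
  have slack : ∀ P : Fin N → ℝ, (∀ k, 0 < P k) → ∀ a : Fin N,
      qalloc P a < P a → ∑ k, qalloc P k = Qtot := by
    intro P hP a ha
    obtain ⟨⟨hfeas, hsum⟩, hopt⟩ := hqalloc P hP
    by_contra hne
    have hlt : ∑ k, qalloc P k < Qtot := lt_of_le_of_ne hsum hne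
    set q := qalloc P with hq
    set δ : ℝ := min (P a - q a) (Qtot - ∑ k, q k) with hδdef
    have hδpos : 0 < δ := lt_min (by linarith) (by linarith)
    have hδ1 : δ ≤ P a - q a := min_le_left _ _
    have hδ2 : δ ≤ Qtot - ∑ k, q k := min_le_right _ _
    set q2 := Function.update q a (q a + δ) with hq2
    have hsum2 : ∑ k, q2 k = (∑ k, q k) + δ := by
      rw [hq2, Finset.sum_update_of_mem (Finset.mem_univ a),
        Finset.sum_sdiff_eq_sub (Finset.subset_univ {a}), Finset.sum_singleton]
      ring
    have hfeas2 : (∀ k, 0 ≤ q2 k ∧ q2 k ≤ P k) ∧ ∑ k, q2 k ≤ Qtot := by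
      refine ⟨fun k => ?_, by rw [hsum2]; linarith⟩
      by_cases hk : k = a
      · subst hk
        rw [hq2, Function.update_self]
        exact ⟨by linarith [(hfeas k).1], by linarith⟩
      · rw [hq2, Function.update_of_ne hk]
        exact hfeas k
    have hstrict : ψ a * Real.log (1 + Ψ * q a / (c a * P a)) <
        ψ a * Real.log (1 + Ψ * (q a + δ) / (c a * P a)) := by
      have hden : 0 < c a * P a := mul_pos (hc a) (hP a)
      have h0 : 0 ≤ q a := (hfeas a).1
      apply mul_lt_mul_of_pos_left ?_ (hψ a)
      apply Real.log_lt_log (by positivity)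
      have : Ψ * q a / (c a * P a) < Ψ * (q a + δ) / (c a * P a) :=
        (div_lt_div_iff_of_pos_right hden).mpr (by nlinarith)
      linarith
    have hcmp : ∑ k, ψ k * Real.log (1 + Ψ * q k / (c k * P k)) <
        ∑ k, ψ k * Real.log (1 + Ψ * q2 k / (c k * P k)) := by
      apply Finset.sum_lt_sum
      · intro k _
        by_cases hk : k = a
        · subst hk
          rw [hq2, Function.update_self]
          exact hstrict.le
        · rw [hq2, Function.update_of_ne hk]
      · exact ⟨a, Finset.mem_univ a, by rw [hq2, Function.update_self]; exact hstrict⟩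
    have := hopt q2 hfeas2
    linarith
  -- EXCHANGE: optimality marginal condition for pairs
  have exch : ∀ P : Fin N → ℝ, (∀ k, 0 < P k) → ∀ a b : Fin N, a ≠ b →
      qalloc P a < P a → 0 < qalloc P b →
      ψ a * (c b * P b + Ψ * qalloc P b) ≤ ψ b * (c a * P a + Ψ * qalloc P a) := by
    intro P hP a b hab ha hb
    obtain ⟨⟨hfeas, hsum⟩, hopt⟩ := hqalloc P hP
    set q := qalloc P with hq
    have hqa0 : 0 ≤ q a := (hfeas a).1
    have hqb0 : 0 ≤ q b := (hfeas b).1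
    have hcPa : 0 < c a * P a := mul_pos (hc a) (hP a)
    have hcPb : 0 < c b * P b := mul_pos (hc b) (hP b)
    set Xa : ℝ := c a * P a + Ψ * q a with hXa
    set Xb : ℝ := c b * P b + Ψ * q b with hXb
    have hXapos : 0 < Xa := by
      rw [hXa]; have := mul_nonneg hΨ.le hqa0; linarith
    have hXbpos : 0 < Xb := by
      rw [hXb]; have := mul_nonneg hΨ.le hqb0; linarith
    have key : ∀ δ : ℝ, 0 < δ → δ ≤ P a - q a → δ ≤ q b →
        ψ a * Xb ≤ ψ b * Xa + (ψ a + ψ b) * Ψ * δ := by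
      intro δ hδ hδa hδb
      set q2 := Function.update (Function.update q a (q a + δ)) b (q b - δ) with hq2
      have hq2a : q2 a = q a + δ := by
        rw [hq2, Function.update_of_ne hab, Function.update_self]
      have hq2b : q2 b = q b - δ := by rw [hq2, Function.update_self]
      have hq2o : ∀ k, k ≠ a → k ≠ b → q2 k = q k := by
        intro k hka hkb
        rw [hq2, Function.update_of_ne hkb, Function.update_of_ne hka]
      have hsum2 : ∑ k, q2 k = ∑ k, q k := by
        have s1 : ∑ k, Function.update q a (q a + δ) k = (∑ k, q k) + δ := by
          rw [Finset.sum_update_of_mem (Finset.mem_univ a),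
            Finset.sum_sdiff_eq_sub (Finset.subset_univ {a}), Finset.sum_singleton]
          ring
        rw [hq2, Finset.sum_update_of_mem (Finset.mem_univ b),
          Finset.sum_sdiff_eq_sub (Finset.subset_univ {b}), Finset.sum_singleton, s1,
          Function.update_of_ne (Ne.symm hab)]
        ring
      have hfeas2 : (∀ k, 0 ≤ q2 k ∧ q2 k ≤ P k) ∧ ∑ k, q2 k ≤ Qtot := by
        refine ⟨fun k => ?_, by rw [hsum2]; exact hsum⟩
        by_cases hka : k = a
        · subst hka; rw [hq2a]; exact ⟨by linarith, by linarith⟩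
        by_cases hkb : k = b
        · subst hkb; rw [hq2b]
          exact ⟨by linarith, by linarith [(hfeas k).2]⟩
        · rw [hq2o k hka hkb]; exact hfeas k
      have hle := hopt q2 hfeas2
      have split : ∀ f : Fin N → ℝ, ∑ k, f k =
          ∑ k ∈ Finset.univ \ {a, b}, f k + (f a + f b) := by
        intro f
        rw [← Finset.sum_sdiff (Finset.subset_univ ({a, b} : Finset (Fin N))),
          Finset.sum_pair hab]
      rw [split, split (fun k => ψ k * Real.log (1 + Ψ * q k / (c k * P k)))] at hle
      have hcong : ∑ k ∈ Finset.univ \ {a, b}, ψ k * Real.log (1 + Ψ * q2 k / (c k * P k)) =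
          ∑ k ∈ Finset.univ \ {a, b}, ψ k * Real.log (1 + Ψ * q k / (c k * P k)) := by
        apply Finset.sum_congr rfl
        intro k hk
        simp only [Finset.mem_sdiff, Finset.mem_insert, Finset.mem_singleton] at hk
        rw [hq2o k (fun h => hk.2 (Or.inl h)) (fun h => hk.2 (Or.inr h))]
      rw [hcong] at hle
      have hle2 : ψ a * Real.log (1 + Ψ * (q a + δ) / (c a * P a)) +
          ψ b * Real.log (1 + Ψ * (q b - δ) / (c b * P b)) ≤
          ψ a * Real.log (1 + Ψ * q a / (c a * P a)) +
          ψ b * Real.log (1 + Ψ * q b / (c b * P b)) := by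
        rw [hq2a, hq2b] at hle
        linarith
      -- convert to X-form
      have e1 : Real.log (1 + Ψ * (q a + δ) / (c a * P a)) =
          Real.log (Xa + Ψ * δ) - Real.log (c a * P a) := by
        rw [logform hcPa (mul_nonneg hΨ.le (by linarith))]
        congr 2
        rw [hXa]; ring
      have e2 : Real.log (1 + Ψ * q a / (c a * P a)) =
          Real.log Xa - Real.log (c a * P a) := by
        rw [logform hcPa (mul_nonneg hΨ.le hqa0), hXa]
      have e3 : Real.log (1 + Ψ * (q b - δ) / (c b * P b)) =
          Real.log (Xb - Ψ * δ) - Real.log (c b * P b) := by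
        rw [logform hcPb (mul_nonneg hΨ.le (by linarith))]
        congr 2
        rw [hXb]; ring
      have e4 : Real.log (1 + Ψ * q b / (c b * P b)) =
          Real.log Xb - Real.log (c b * P b) := by
        rw [logform hcPb (mul_nonneg hΨ.le hqb0), hXb]
      rw [e1, e2, e3, e4] at hle2
      have hBpos : 0 < Xb - Ψ * δ := by
        rw [hXb]; have := mul_le_mul_of_nonneg_left hδb hΨ.le; linarith
      have hApos : 0 < Xa + Ψ * δ := by
        have := mul_pos hΨ hδ; linarith
      have g1 : Ψ * δ / (Xa + Ψ * δ) ≤ Real.log (Xa + Ψ * δ) - Real.log Xa :=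
        log_ratio_ge hXapos (by positivity)
      have g2 : Real.log Xb - Real.log (Xb - Ψ * δ) ≤ Ψ * δ / (Xb - Ψ * δ) :=
        log_ratio_le (by positivity) hBpos
      have hmul : ψ a * (Ψ * δ / (Xa + Ψ * δ)) ≤ ψ b * (Ψ * δ / (Xb - Ψ * δ)) := by
        have c1 : ψ a * (Ψ * δ / (Xa + Ψ * δ)) ≤
            ψ a * (Real.log (Xa + Ψ * δ) - Real.log Xa) :=
          mul_le_mul_of_nonneg_left g1 (hψ a).le
        have c2 : ψ b * (Real.log Xb - Real.log (Xb - Ψ * δ)) ≤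
            ψ b * (Ψ * δ / (Xb - Ψ * δ)) :=
          mul_le_mul_of_nonneg_left g2 (hψ b).le
        linarith [hle2]
      rw [mul_div_assoc'] at hmul
      rw [mul_div_assoc'] at hmul
      have hcross := (div_le_div_iff₀ hApos hBpos).mp hmul
      have hpos : 0 < Ψ * δ := by positivity
      have h3 : Ψ * δ * (ψ a * (Xb - Ψ * δ)) ≤ Ψ * δ * (ψ b * (Xa + Ψ * δ)) := by
        linarith [hcross]
      have h4 := le_of_mul_le_mul_left h3 hpos
      linarith [h4]
    by_contra hcon
    push_neg at hcon
    have hDpos : 0 < (ψ a + ψ b) * Ψ := mul_pos (by linarith [hψ a, hψ b]) hΨ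
    set δ : ℝ := min (min (P a - q a) (q b))
        ((ψ a * Xb - ψ b * Xa) / (2 * ((ψ a + ψ b) * Ψ))) with hδ
    have hδpos : 0 < δ := by
      apply lt_min (lt_min (by linarith) hb)
      apply div_pos (by linarith) (by linarith)
    have h1 : δ ≤ P a - q a := le_trans (min_le_left _ _) (min_le_left _ _)
    have h2 : δ ≤ q b := le_trans (min_le_left _ _) (min_le_right _ _)
    have h3 : δ ≤ (ψ a * Xb - ψ b * Xa) / (2 * ((ψ a + ψ b) * Ψ)) := min_le_right _ _
    rw [le_div_iff₀ (by linarith)] at h3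
    have hkey := key δ hδpos h1 h2
    linarith [hkey, h3, hcon]
  -- FULL: if total demand within quota, everyone fully served
  have full : ∀ P : Fin N → ℝ, (∀ k, 0 < P k) → ∑ k, P k ≤ Qtot →
      ∀ a, qalloc P a = P a := by
    intro P hP hPsum a
    obtain ⟨⟨hfeas, hsum⟩, _⟩ := hqalloc P hP
    by_contra hne
    have hlt : qalloc P a < P a := lt_of_le_of_ne (hfeas a).2 hne
    have hq : ∑ k, qalloc P k = Qtot := slack P hP a hlt
    have hstrict : ∑ k, qalloc P k < ∑ k, P k :=
      Finset.sum_lt_sum (fun k _ => (hfeas k).2) ⟨a, Finset.mem_univ a, hlt⟩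
    linarith
  -- STEP A: at a NE every user is fully served
  have fullself : ∀ i, qalloc Q i = Q i := by
    intro i
    by_contra hne
    obtain ⟨⟨hfeasQ, hsumQ⟩, _⟩ := hqalloc Q hQpos
    have hlt : qalloc Q i < Q i := lt_of_le_of_ne (hfeasQ i).2 hne
    have hne' : (Finset.univ : Finset (Fin N)).Nonempty := ⟨i, Finset.mem_univ i⟩
    set m : ℝ := min Qtot
        (Finset.univ.inf' hne' fun b => ψ i * (c b * Q b) / (ψ b * (c i + Ψ))) with hm
    have hmpos : 0 < m := by
      apply lt_min hQtot
      rw [Finset.lt_inf'_iff]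
      intro b _
      exact div_pos (mul_pos (hψ i) (mul_pos (hc b) (hQpos b)))
        (mul_pos (hψ b) (by linarith [hc i]))
    set Q' : ℝ := m / 2 with hQ'def
    have hQ'pos : 0 < Q' := half_pos hmpos
    set P := Function.update Q i Q' with hPdef
    have hPpos : ∀ k, 0 < P k := by
      intro k
      by_cases hk : k = i
      · subst hk; rw [hPdef, Function.update_self]; exact hQ'pos
      · rw [hPdef, Function.update_of_ne hk]; exact hQpos k
    obtain ⟨⟨hfeasP, hsumP⟩, _⟩ := hqalloc P hPpos
    have hPi : P i = Q' := by rw [hPdef, Function.update_self]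
    have hfullP : qalloc P i = P i := by
      by_contra hne2
      have hlt2 : qalloc P i < P i := lt_of_le_of_ne (hfeasP i).2 hne2
      have hQsum2 : ∑ k, qalloc P k = Qtot := slack P hPpos i hlt2
      have hrest : 0 < ∑ k ∈ Finset.univ.erase i, qalloc P k := by
        have hsplit : ∑ k ∈ Finset.univ.erase i, qalloc P k + qalloc P i = ∑ k, qalloc P k :=
          Finset.sum_erase_add _ _ (Finset.mem_univ i)
        have hQ'lt : Q' < Qtot := by
          have := min_le_left Qtot
            (Finset.univ.inf' hne' fun b => ψ i * (c b * Q b) / (ψ b * (c i + Ψ)))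
          rw [hQ'def]; linarith
        have : qalloc P i < Qtot := by
          calc qalloc P i < P i := hlt2
          _ = Q' := hPi
          _ < Qtot := hQ'lt
        linarith
      obtain ⟨b, hbmem, hbpos⟩ : ∃ b ∈ Finset.univ.erase i, 0 < qalloc P b := by
        by_contra hall
        push_neg at hall
        have := Finset.sum_nonpos hall
        linarith
      have hbi : b ≠ i := (Finset.mem_erase.mp hbmem).1
      have hPb : P b = Q b := by rw [hPdef, Function.update_of_ne hbi]
      have hex := exch P hPpos i b (Ne.symm hbi) hlt2 hbpos
      rw [hPb, hPi] at hex
      have hub : qalloc P i ≤ Q' := by rw [← hPi]; exact (hfeasP i).2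
      have hlow : ψ i * (c b * Q b) ≤ ψ i * (c b * Q b + Ψ * qalloc P b) := by
        have := mul_nonneg hΨ.le (hfeasP b).1
        apply mul_le_mul_of_nonneg_left (by linarith) (hψ i).le
      have hup : ψ b * (c i * Q' + Ψ * qalloc P i) ≤ ψ b * ((c i + Ψ) * Q') := by
        apply mul_le_mul_of_nonneg_left ?_ (hψ b).le
        have h1 := mul_le_mul_of_nonneg_left hub hΨ.le
        have h2 : (c i + Ψ) * Q' = c i * Q' + Ψ * Q' := by ring
        linarith
      have hinf : m ≤ ψ i * (c b * Q b) / (ψ b * (c i + Ψ)) := by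
        refine le_trans (min_le_right _ _) (Finset.inf'_le _ (Finset.mem_univ b))
      have hden : 0 < ψ b * (c i + Ψ) := mul_pos (hψ b) (by linarith [hc i])
      rw [le_div_iff₀ hden] at hinf
      have hQ'm : Q' = m / 2 := hQ'def
      nlinarith [hlow, hex, hup, hinf, mul_pos hden hmpos]
    -- now contradict the NE
    have hNEi := hNE i Q' hQ'pos
    rw [← hPdef] at hNEi
    apply hNEi
    left
    have harg1 : Ψ * qalloc P i / (c i * Q') = Ψ / c i := by
      rw [hfullP, hPi, div_eq_div_iff (mul_pos (hc i) hQ'pos).ne' (hc i).ne']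
      ring
    rw [harg1]
    apply Real.log_lt_log
    · have := div_nonneg (mul_nonneg hΨ.le (hfeasQ i).1) (mul_pos (hc i) (hQpos i)).le
      linarith
    · have harg2 : Ψ * qalloc Q i / (c i * Q i) < Ψ / c i := by
        rw [div_lt_div_iff₀ (mul_pos (hc i) (hQpos i)) (hc i)]
        have := mul_pos (mul_pos hΨ (hc i)) (sub_pos.mpr hlt)
        nlinarith [this]
      linarith
  obtain ⟨⟨hfeasQ, hsumQle⟩, _⟩ := hqalloc Q hQpos
  have hQsum_le : ∑ k, Q k ≤ Qtot := by
    calc ∑ k, Q k = ∑ k, qalloc Q k := Finset.sum_congr rfl (fun k _ => (fullself k).symm)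
    _ ≤ Qtot := hsumQle
  -- STEP B : C1
  have hC1 : ∑ k, Q k = Qtot := by
    by_contra hne
    have hlt : ∑ k, Q k < Qtot := lt_of_le_of_ne hQsum_le hne
    have i : Fin N := ⟨0, hN⟩
    set Q' : ℝ := Q i + (Qtot - ∑ k, Q k) with hQ'def
    have hQ'pos : 0 < Q' := by rw [hQ'def]; linarith [hQpos i]
    set P := Function.update Q i Q' with hPdef
    have hPpos : ∀ k, 0 < P k := by
      intro k
      by_cases hk : k = i
      · subst hk; rw [hPdef, Function.update_self]; exact hQ'pos
      · rw [hPdef, Function.update_of_ne hk]; exact hQpos k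
    have hPsum : ∑ k, P k = Qtot := by
      rw [hPdef, Finset.sum_update_of_mem (Finset.mem_univ i),
        Finset.sum_sdiff_eq_sub (Finset.subset_univ {i}), Finset.sum_singleton, hQ'def]
      ring
    have hfa := full P hPpos (le_of_eq hPsum)
    have hPi : P i = Q' := by rw [hPdef, Function.update_self]
    have hNEi := hNE i Q' hQ'pos
    rw [← hPdef] at hNEi
    apply hNEi
    right
    constructor
    · have hfr : Ψ * Q' / (c i * Q') = Ψ * Q i / (c i * Q i) := by
        rw [div_eq_div_iff (mul_pos (hc i) hQ'pos).ne' (mul_pos (hc i) (hQpos i)).ne']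
        ring
      rw [hfa i, hPi, fullself i, hfr]
    · rw [hfa i, hPi, fullself i, hQ'def]
      linarith
  -- STEP C : C2 (one-sided inequality)
  have hC2le : ∀ i j : Fin N, ψ i * ((c j + Ψ) * Q j) ≤ ψ j * ((c i + Ψ) * Q i) := by
    intro i j
    by_contra hcon
    push_neg at hcon
    have hij : i ≠ j := by
      intro h
      subst h
      exact lt_irrefl _ hcon
    set G : ℝ := ψ i * ((c j + Ψ) * Q j) - ψ j * ((c i + Ψ) * Q i) with hG
    have hGpos : 0 < G := by rw [hG]; linarith
    have hDpos : 0 < ψ i * Ψ + ψ j * (c i + Ψ) := by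
      have h1 := mul_pos (hψ i) hΨ
      have h2 := mul_pos (hψ j) (show (0:ℝ) < c i + Ψ by linarith [hc i])
      linarith
    set ε : ℝ := min (Q j) (G / (ψ i * Ψ + ψ j * (c i + Ψ))) / 2 with hε
    have hεpos : 0 < ε := half_pos (lt_min (hQpos j) (div_pos hGpos hDpos))
    have hε1 : ε < Q j := by
      have h := min_le_left (Q j) (G / (ψ i * Ψ + ψ j * (c i + Ψ)))
      rw [hε]; linarith [hQpos j]
    have hε2 : ε * (ψ i * Ψ + ψ j * (c i + Ψ)) ≤ G / 2 := by
      have h := min_le_right (Q j) (G / (ψ i * Ψ + ψ j * (c i + Ψ)))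
      rw [le_div_iff₀ hDpos] at h
      have h3 : ε * (ψ i * Ψ + ψ j * (c i + Ψ)) =
          (min (Q j) (G / (ψ i * Ψ + ψ j * (c i + Ψ))) * (ψ i * Ψ + ψ j * (c i + Ψ))) / 2 := by
        rw [hε]; ring
      rw [h3]; linarith
    set Q' : ℝ := Q i + ε with hQ'def
    have hQ'pos : 0 < Q' := by rw [hQ'def]; linarith [hQpos i]
    set P := Function.update Q i Q' with hPdef
    have hPpos : ∀ k, 0 < P k := by
      intro k
      by_cases hk : k = i
      · subst hk; rw [hPdef, Function.update_self]; exact hQ'pos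
      · rw [hPdef, Function.update_of_ne hk]; exact hQpos k
    obtain ⟨⟨hfeasP, hsumP⟩, _⟩ := hqalloc P hPpos
    have hPi : P i = Q' := by rw [hPdef, Function.update_self]
    have hNEi := hNE i Q' hQ'pos
    rw [← hPdef] at hNEi
    rcases eq_or_lt_of_le (hfeasP i).2 with heq | hlt2
    · apply hNEi
      right
      constructor
      · have hfr : Ψ * Q' / (c i * Q') = Ψ * Q i / (c i * Q i) := by
          rw [div_eq_div_iff (mul_pos (hc i) hQ'pos).ne' (mul_pos (hc i) (hQpos i)).ne']
          ring
        rw [heq, hPi, fullself i, hfr]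
      · rw [heq, hPi, fullself i, hQ'def]
        linarith
    · have hQsum' : ∑ k, qalloc P k = Qtot := slack P hPpos i hlt2
      have hsum_erase : ∑ k ∈ Finset.univ.erase i, (Q k - qalloc P k) =
          qalloc P i - Q i := by
        rw [Finset.sum_sub_distrib]
        have e1 : ∑ k ∈ Finset.univ.erase i, Q k = (∑ k, Q k) - Q i := by
          rw [← Finset.sum_erase_add Finset.univ Q (Finset.mem_univ i)]; ring
        have e2 : ∑ k ∈ Finset.univ.erase i, qalloc P k =
            (∑ k, qalloc P k) - qalloc P i := by
          rw [← Finset.sum_erase_add Finset.univ _ (Finset.mem_univ i)]; ring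
        rw [e1, e2, hC1, hQsum']
        ring
      have hterm : Q j - qalloc P j ≤ qalloc P i - Q i := by
        rw [← hsum_erase]
        refine Finset.single_le_sum (f := fun k => Q k - qalloc P k) ?_
          (Finset.mem_erase.mpr ⟨Ne.symm hij, Finset.mem_univ j⟩)
        intro k hk
        have hki : k ≠ i := (Finset.mem_erase.mp hk).1
        have hPk : P k = Q k := by rw [hPdef, Function.update_of_ne hki]
        have h2 := (hfeasP k).2
        rw [hPk] at h2
        show 0 ≤ Q k - qalloc P k
        linarith
      have hqi_lt : qalloc P i < Q i + ε := by rw [← hQ'def, ← hPi]; exact hlt2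
      have hqj : Q j - ε < qalloc P j := by linarith
      have hqjpos : 0 < qalloc P j := by linarith
      have hPj : P j = Q j := by rw [hPdef, Function.update_of_ne (Ne.symm hij)]
      have hex := exch P hPpos i j hij hlt2 hqjpos
      rw [hPj, hPi, hQ'def] at hex
      have m1 := mul_lt_mul_of_pos_left hqj (mul_pos (hψ i) hΨ)
      have m2 := mul_lt_mul_of_pos_left hqi_lt (mul_pos (hψ j) hΨ)
      linarith [hex, m1, m2, hε2, hGpos, hG]
  refine ⟨hC1, fun i j => ?_⟩
  have h1 := hC2le i j
  have h2 := hC2le j i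
  have heq : ψ i * ((c j + Ψ) * Q j) = ψ j * ((c i + Ψ) * Q i) := le_antisymm h1 h2
  rw [div_eq_div_iff (mul_pos hΨ (hψ i)).ne' (mul_pos hΨ (hψ j)).ne']
  linear_combination (-Ψ) * heq
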